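/- Let T be a bounded self-adjoint operator on a complex Hilbert space H. For nonzero f ∈ H define S(f) := v_{f/‖f‖}(T), the variance of the normalized vector. Then the Gateaux variation of S at f with respect to the realified inner product exists and equals (2/‖f‖²)·((T - e_{f/‖f‖}(T))² f - v_{f/‖f‖}(T) f). -/

import Mathlib

open Asymptotics Filter Topology

/-- The variation (with respect to the realified inner product) of the normalized
variance `S(f) = v_{f/‖f‖}(T)` at a nonzero `f` is
`(2/‖f‖²)·((T - e)² f - v f)` where `e = e_{f/‖f‖}(T)` and `v = v_{f/‖f‖}(T)`. -/
theorem stmt_5 {H : Type*} [NormedAddCommGroup H] [InnerProductSpace ℂ H] [CompleteSpace H]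
    (T : H →L[ℂ] H) (hT : IsSelfAdjoint T) (f : H) (hf : f ≠ 0)
    (e : H → ℝ) (he : ∀ x : H, e x = (inner ℂ (T (‖x‖⁻¹ • x)) (‖x‖⁻¹ • x) : ℂ).re)
    (v : H → ℝ)
    (hv : ∀ x : H, v x = ‖T (‖x‖⁻¹ • x) - e x • (‖x‖⁻¹ • x)‖ ^ 2) :
    (fun h : H => v (f + h) - v f
        - (inner ℂ (((2 : ℝ) / ‖f‖ ^ 2) •
            (T (T f) - (2 * e f) • T f + ((e f) ^ 2) • f - v f • f)) h : ℂ).re)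
      =o[𝓝 (0 : H)] fun h : H => ‖h‖ := by
  letI : InnerProductSpace ℝ H := InnerProductSpace.rclikeToReal ℂ H
  have hre : ∀ a b : H, (inner ℂ a b : ℂ).re = (inner ℝ a b : ℝ) := fun a b => rfl
  have hsym : ∀ x y : H, (inner ℝ (T x) y : ℝ) = (inner ℝ x (T y) : ℝ) := fun x y => by
    rw [← hre, ← hre, hT.isSymmetric.apply_clm]
  -- closed form for `e`
  have he' : ∀ x : H, e x = (inner ℝ (T x) x : ℝ) * (‖x‖ ^ 2)⁻¹ := by
    intro x
    rw [he x, hre, T.map_smul_of_tower, real_inner_smul_left, real_inner_smul_right,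
      pow_two, mul_inv]
    ring
  set Fn : H → ℝ := fun x => (inner ℝ (T x) (T x) : ℝ) * ((inner ℝ x x : ℝ))⁻¹
      - ((inner ℝ (T x) x : ℝ) * ((inner ℝ x x : ℝ))⁻¹) *
        ((inner ℝ (T x) x : ℝ) * ((inner ℝ x x : ℝ))⁻¹) with hFn_def
  -- closed form for `v` at nonzero points
  have hv' : ∀ x : H, x ≠ 0 → v x = Fn x := by
    intro x hx
    have hx' : ‖x‖ ≠ 0 := norm_ne_zero_iff.mpr hx
    have h1 : T (‖x‖⁻¹ • x) - e x • (‖x‖⁻¹ • x) = ‖x‖⁻¹ • (T x - e x • x) := by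
      rw [T.map_smul_of_tower, smul_sub, smul_comm]
    rw [hv x, h1, norm_smul, mul_pow, norm_inv, norm_norm, norm_sub_sq_real,
      real_inner_smul_right, norm_smul, mul_pow, Real.norm_eq_abs, sq_abs]
    rw [hFn_def]
    simp only [he', real_inner_self_eq_norm_sq]
    field_simp
    ring
  have hff : (‖f‖ : ℝ) ≠ 0 := norm_ne_zero_iff.mpr hf
  have hNf0 : (inner ℝ f f : ℝ) ≠ 0 := by
    rw [real_inner_self_eq_norm_sq]; positivity
  -- derivatives of the building blocks
  have hTd : HasFDerivAt (fun x : H => T x) (T.restrictScalars ℝ) f :=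
    (T.restrictScalars ℝ).hasFDerivAt
  have hNd : HasFDerivAt (fun x : H => (inner ℝ x x : ℝ)) ((2 : ℝ) • innerSL ℝ f) f := by
    refine HasFDerivAt.congr_fderiv ((hasFDerivAt_id (𝕜 := ℝ) f).inner ℝ (hasFDerivAt_id f)) ?_
    ext h
    simp [real_inner_comm f h]
    ring
  have hAd : HasFDerivAt (fun x : H => (inner ℝ (T x) (T x) : ℝ))
      ((2 : ℝ) • innerSL ℝ (T (T f))) f := by
    refine HasFDerivAt.congr_fderiv (hTd.inner ℝ hTd) ?_
    ext h
    have h1 : (inner ℝ (T h) (T f) : ℝ) = inner ℝ (T (T f)) h := by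
      rw [real_inner_comm, ← hsym]
    simp [h1]
    rw [← hsym (T f) h]
    ring
  have hBd : HasFDerivAt (fun x : H => (inner ℝ (T x) x : ℝ))
      ((2 : ℝ) • innerSL ℝ (T f)) f := by
    refine HasFDerivAt.congr_fderiv (hTd.inner ℝ (hasFDerivAt_id (𝕜 := ℝ) f)) ?_
    ext h
    have h1 : (inner ℝ (T h) f : ℝ) = inner ℝ (T f) h := by
      rw [hsym, real_inner_comm]
    simp [h1]
    ring
  have hNinv : HasFDerivAt ((fun y : ℝ => y⁻¹) ∘ (fun x : H => (inner ℝ x x : ℝ)))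
      ((-(((inner ℝ f f : ℝ)) ^ 2)⁻¹) • ((2 : ℝ) • innerSL ℝ f)) f :=
    HasDerivAt.comp_hasFDerivAt f (hasDerivAt_inv hNf0) hNd
  set g : H := ((2 : ℝ) / ‖f‖ ^ 2) •
      (T (T f) - (2 * e f) • T f + ((e f) ^ 2) • f - v f • f) with hg_def
  have hq := hBd.mul hNinv
  have hFd := (hAd.mul hNinv).sub (hq.mul hq)
  have hFd' : HasFDerivAt Fn (innerSL ℝ g) f := by
    refine HasFDerivAt.congr_fderiv hFd ?_
    ext h
    simp only [innerSL_apply_apply, hg_def, real_inner_smul_left, inner_sub_left, inner_add_left,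
      ContinuousLinearMap.coe_sub', Pi.sub_apply, ContinuousLinearMap.add_apply,
      ContinuousLinearMap.coe_smul', Pi.smul_apply, smul_eq_mul,
      ContinuousLinearMap.coe_restrictScalars']
    rw [he', hv' f hf, hFn_def]
    simp only [he', real_inner_self_eq_norm_sq, Pi.mul_apply, Function.comp_apply]
    field_simp
    ring
  have hev : v =ᶠ[𝓝 f] Fn := by
    filter_upwards [eventually_ne_nhds hf] with x hx
    exact hv' x hx
  have hvd : HasFDerivAt v (innerSL ℝ g) f := hFd'.congr_of_eventuallyEq hev
  have h2 := (hasFDerivAt_iff_isLittleO_nhds_zero.mp hvd).norm_right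
  exact h2.congr (fun h => by rw [innerSL_apply_apply, ← hre]) (fun h => rfl)
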